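/- Let G = (V,E) be a connected finite simple graph with n = |V|, and let 𝒢 be the graph obtained from G by the subdivision-path-apex construction. If 𝒮 is a proper stalled subset of 𝒢 with |𝒮| ≥ (2n+1)·|E| + 2, then ε ∉ 𝒮. -/

import Mathlib

/-- An empty vertex `v` is forced by the filled set `F` if some filled vertex `u ∈ F`
adjacent to `v` has `v` as its unique neighbor outside `F`. -/
def IsForced {W : Type*} (H : SimpleGraph W) (F : Set W) (v : W) : Prop :=
  v ∉ F ∧ ∃ u, u ∈ F ∧ H.Adj u v ∧ ∀ w, H.Adj u w → w ∉ F → w = v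

/-- An empty vertex `v` is skew forced by `F` if some vertex `u` (filled or not)
adjacent to `v` has `v` as its unique neighbor outside `F`. -/
def IsSkewForced {W : Type*} (H : SimpleGraph W) (F : Set W) (v : W) : Prop :=
  v ∉ F ∧ ∃ u, H.Adj u v ∧ ∀ w, H.Adj u w → w ∉ F → w = v

/-- `F` is stalled if no empty vertex is forced by `F`. -/
def Stalled {W : Type*} (H : SimpleGraph W) (F : Set W) : Prop :=
  ∀ v, ¬ IsForced H F v

/-- `F` is skew stalled if no empty vertex is skew forced by `F`. -/
def SkewStalled {W : Type*} (H : SimpleGraph W) (F : Set W) : Prop :=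
  ∀ v, ¬ IsSkewForced H F v

/-- A set of vertices is independent if its vertices are pairwise non-adjacent. -/
def IndepIn {W : Type*} (H : SimpleGraph W) (U : Set W) : Prop :=
  U.Pairwise fun a b => ¬ H.Adj a b

/-- Vertex set of the subdivision-path-apex construction: the vertices of `G`,
vertices `e^i` for each edge `e` and `0 ≤ i ≤ 2n`, and one apex vertex `ε`. -/
abbrev GVert {V : Type*} [Fintype V] (G : SimpleGraph V) : Type _ :=
  V ⊕ (G.edgeSet × Fin (2 * Fintype.card V + 1)) ⊕ Unit

/-- Generating relation: `v ~ e^0` when `v ∈ e`; `e^i ~ e^{i+1}`; `ε ~ e^0`. -/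
def gRel {V : Type*} [Fintype V] (G : SimpleGraph V) : GVert G → GVert G → Prop
  | Sum.inl v, Sum.inr (Sum.inl (e, i)) => i.val = 0 ∧ v ∈ (e : Sym2 V)
  | Sum.inr (Sum.inl (e, i)), Sum.inr (Sum.inl (e', j)) => e = e' ∧ i.val + 1 = j.val
  | Sum.inr (Sum.inr _), Sum.inr (Sum.inl (_, i)) => i.val = 0
  | _, _ => False

/-- The subdivision-path-apex construction `𝒢`. -/
def GG {V : Type*} [Fintype V] (G : SimpleGraph V) : SimpleGraph (GVert G) :=
  SimpleGraph.fromRel (gRel G)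

section Aux
variable {V : Type*} [Fintype V] {G : SimpleGraph V}

local notation "K" => 2 * Fintype.card V + 1

/-- shorthand for path vertices -/
abbrev PV (e : G.edgeSet) (i : Fin K) : GVert G := Sum.inr (Sum.inl (e, i))

abbrev epsV (G : SimpleGraph V) : GVert G := Sum.inr (Sum.inr ())

lemma gg_adj {a b : GVert G} : (GG G).Adj a b ↔ a ≠ b ∧ (gRel G a b ∨ gRel G b a) :=
  SimpleGraph.fromRel_adj _ _ _

lemma adj_PP {e : G.edgeSet} {i j : Fin K} (h : i.val + 1 = j.val) :
    (GG G).Adj (PV e i) (PV e j) := by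
  rw [gg_adj]
  refine ⟨?_, Or.inl ⟨rfl, h⟩⟩
  simp only [ne_eq, Sum.inr.injEq, Sum.inl.injEq, Prod.mk.injEq]
  rintro ⟨-, rfl⟩; omega

lemma adj_v0 {v : V} {e : G.edgeSet} (hv : v ∈ (e : Sym2 V)) {i : Fin K} (hi : i.val = 0) :
    (GG G).Adj (Sum.inl v) (PV e i) := by
  rw [gg_adj]
  exact ⟨by simp, Or.inl ⟨hi, hv⟩⟩

lemma adj_eps0 {e : G.edgeSet} {i : Fin K} (hi : i.val = 0) :
    (GG G).Adj (epsV G) (PV e i) := by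
  rw [gg_adj]
  exact ⟨by simp, Or.inl hi⟩

/-- characterization of neighbors of a path vertex -/
lemma adj_P_cases {e : G.edgeSet} {i : Fin K} {w : GVert G}
    (h : (GG G).Adj (PV e i) w) :
    (∃ v, w = Sum.inl v ∧ i.val = 0 ∧ v ∈ (e : Sym2 V)) ∨
    (∃ j : Fin K, w = PV e j ∧ (i.val + 1 = j.val ∨ j.val + 1 = i.val)) ∨
    (w = epsV G ∧ i.val = 0) := by
  rw [gg_adj] at h
  obtain ⟨-, h⟩ := h
  rcases w with v | we | u
  · rcases h with h | h
    · exact absurd h (by simp [gRel])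
    · exact Or.inl ⟨v, rfl, h.1, h.2⟩
  · rcases we with ⟨e', j⟩
    rcases h with ⟨rfl, h⟩ | ⟨rfl, h⟩
    · exact Or.inr (Or.inl ⟨j, rfl, Or.inl h⟩)
    · exact Or.inr (Or.inl ⟨j, rfl, Or.inr h⟩)
  · rcases h with h | h
    · exact absurd h (by simp [gRel])
    · exact Or.inr (Or.inr ⟨rfl, h⟩)

end Aux
section Aux2
variable {V : Type*} [Fintype V] {G : SimpleGraph V}
local notation "K" => 2 * Fintype.card V + 1
variable {S : Set (GVert G)}

/-- if `e^i` is empty with `i ≥ 2` then `e^{i-1}` or `e^{i-2}` is empty. -/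
lemma step_down (hS : Stalled (GG G) S) {e : G.edgeSet} {i : Fin K} (h2 : 2 ≤ i.val)
    (hi : PV e i ∉ S) :
    PV e ⟨i.val - 1, by omega⟩ ∉ S ∨ PV e ⟨i.val - 2, by omega⟩ ∉ S := by
  by_contra hc
  push_neg at hc
  obtain ⟨h1, h0⟩ := hc
  apply hS (PV e i)
  refine ⟨hi, PV e ⟨i.val - 1, by omega⟩, h1, adj_PP (show i.val - 1 + 1 = i.val by omega), ?_⟩
  intro w hw hwS
  rcases adj_P_cases hw with ⟨v, -, h0', -⟩ | ⟨j, rfl, hj | hj⟩ | ⟨-, h0'⟩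
  · have : i.val - 1 = 0 := h0'; omega
  · have hj' : i.val - 1 + 1 = j.val := hj
    have : j = i := by ext; omega
    rw [this]
  · have hj' : j.val + 1 = i.val - 1 := hj
    have : j = ⟨i.val - 2, by omega⟩ := by ext; simp; omega
    rw [this] at hwS
    exact absurd h0 hwS
  · have : i.val - 1 = 0 := h0'; omega

/-- if `e^i` is empty with `i ≥ 1`, then `e^{2n}` is empty. -/
lemma reach_top (hS : Stalled (GG G) S) :
    ∀ (d : ℕ) (e : G.edgeSet) (i : Fin K), 1 ≤ i.val → 2 * Fintype.card V - i.val ≤ d →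
      PV e i ∉ S → PV e ⟨2 * Fintype.card V, by omega⟩ ∉ S := by
  intro d
  induction d with
  | zero =>
    intro e i h1 hd hi
    have : i = ⟨2 * Fintype.card V, by omega⟩ := by ext; simp; omega
    rwa [this] at hi
  | succ d ih =>
    intro e i h1 hd hi
    by_cases htop : i.val = 2 * Fintype.card V
    · have : i = ⟨2 * Fintype.card V, by omega⟩ := by ext; simp; omega
      rwa [this] at hi
    have hlt : i.val < 2 * Fintype.card V := by omega
    set i1 : Fin K := ⟨i.val + 1, by omega⟩ with hi1
    by_cases h1S : PV e i1 ∈ S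
    · -- e^{i+1} is filled
      by_cases hcase : i.val + 1 = 2 * Fintype.card V
      · -- e^{i+1} is the top vertex: it forces e^i, contradiction
        exfalso
        apply hS (PV e i)
        refine ⟨hi, PV e i1, h1S, ?_, ?_⟩
        · exact (GG G).adj_symm (adj_PP rfl)
        · intro w hw hwS
          rcases adj_P_cases hw with ⟨v, -, h0', -⟩ | ⟨j, rfl, hj | hj⟩ | ⟨-, h0'⟩
          · have : i.val + 1 = 0 := h0'; omega
          · have hj' : i.val + 1 + 1 = j.val := hj
            have := j.isLt; omega
          · have hj' : j.val + 1 = i.val + 1 := hj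
            have : j = i := by ext; omega
            rw [this]
          · have : i.val + 1 = 0 := h0'; omega
      · -- i+2 ≤ 2n
        set i2 : Fin K := ⟨i.val + 2, by omega⟩ with hi2
        by_cases h2S : PV e i2 ∈ S
        · -- e^{i+1} forces e^i, contradiction
          exfalso
          apply hS (PV e i)
          refine ⟨hi, PV e i1, h1S, (GG G).adj_symm (adj_PP rfl), ?_⟩
          intro w hw hwS
          rcases adj_P_cases hw with ⟨v, -, h0', -⟩ | ⟨j, rfl, hj | hj⟩ | ⟨-, h0'⟩
          · have : i.val + 1 = 0 := h0'; omega
          · have hj' : i.val + 1 + 1 = j.val := hj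
            have : j = i2 := by ext; simp [hi2]; omega
            rw [this] at hwS
            exact absurd h2S hwS
          · have hj' : j.val + 1 = i.val + 1 := hj
            have : j = i := by ext; omega
            rw [this]
          · have : i.val + 1 = 0 := h0'; omega
        · exact ih e i2 (by simp [hi2]) (by simp [hi2]; omega) h2S
    · exact ih e i1 (by simp [hi1]) (by simp [hi1]; omega) h1S

end Aux2
section Aux3
variable {V : Type*} [Fintype V] {G : SimpleGraph V}
local notation "K" => 2 * Fintype.card V + 1
variable {S : Set (GVert G)}

/-- counting: if `e^i` is empty then at least `i/2 + 1` of `e^0,…,e^i` are empty. -/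
lemma count_empty (hS : Stalled (GG G) S) (e : G.edgeSet) :
    ∀ i : ℕ, ∀ h : i < K, PV e ⟨i, h⟩ ∉ S →
      i / 2 + 1 ≤ {j : Fin K | j.val ≤ i ∧ PV e j ∉ S}.ncard := by
  intro i
  induction i using Nat.strong_induction_on with
  | _ i ih =>
    intro h hi
    have hfin : {j : Fin K | j.val ≤ i ∧ PV e j ∉ S}.Finite := Set.toFinite _
    by_cases h2 : 2 ≤ i
    · obtain hj | hj := step_down hS (i := ⟨i, h⟩) h2 hi
      · have hcnt := ih (i - 1) (by omega) (by omega) hj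
        have hsub : insert (⟨i, h⟩ : Fin K) {j : Fin K | j.val ≤ i - 1 ∧ PV e j ∉ S}
            ⊆ {j : Fin K | j.val ≤ i ∧ PV e j ∉ S} := by
          rintro x (rfl | ⟨hx1, hx2⟩)
          · exact ⟨le_refl _, hi⟩
          · exact ⟨by omega, hx2⟩
        have hnm : (⟨i, h⟩ : Fin K) ∉ {j : Fin K | j.val ≤ i - 1 ∧ PV e j ∉ S} := by
          intro hx; have := hx.1; simp at this; omega
        calc i / 2 + 1 ≤ ((i - 1) / 2 + 1) + 1 := by omega
          _ ≤ {j : Fin K | j.val ≤ i - 1 ∧ PV e j ∉ S}.ncard + 1 := by omega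
          _ = (insert (⟨i, h⟩ : Fin K) {j : Fin K | j.val ≤ i - 1 ∧ PV e j ∉ S}).ncard := by
              rw [Set.ncard_insert_of_notMem hnm (Set.toFinite _)]
          _ ≤ _ := Set.ncard_le_ncard hsub hfin
      · have hcnt := ih (i - 2) (by omega) (by omega) hj
        have hsub : insert (⟨i, h⟩ : Fin K) {j : Fin K | j.val ≤ i - 2 ∧ PV e j ∉ S}
            ⊆ {j : Fin K | j.val ≤ i ∧ PV e j ∉ S} := by
          rintro x (rfl | ⟨hx1, hx2⟩)
          · exact ⟨le_refl _, hi⟩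
          · exact ⟨by omega, hx2⟩
        have hnm : (⟨i, h⟩ : Fin K) ∉ {j : Fin K | j.val ≤ i - 2 ∧ PV e j ∉ S} := by
          intro hx; have := hx.1; simp at this; omega
        calc i / 2 + 1 ≤ ((i - 2) / 2 + 1) + 1 := by omega
          _ ≤ {j : Fin K | j.val ≤ i - 2 ∧ PV e j ∉ S}.ncard + 1 := by omega
          _ = (insert (⟨i, h⟩ : Fin K) {j : Fin K | j.val ≤ i - 2 ∧ PV e j ∉ S}).ncard := by
              rw [Set.ncard_insert_of_notMem hnm (Set.toFinite _)]
          _ ≤ _ := Set.ncard_le_ncard hsub hfin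
    · have hne : {j : Fin K | j.val ≤ i ∧ PV e j ∉ S}.Nonempty := ⟨⟨i, h⟩, le_refl _, hi⟩
      have := (Set.ncard_pos hfin).mpr hne
      omega
end Aux3
section Aux4
variable {V : Type*} [Fintype V] {G : SimpleGraph V}
local notation "K" => 2 * Fintype.card V + 1
variable {S : Set (GVert G)}

lemma top_filled (hS : Stalled (GG G) S) (hsmall : Sᶜ.ncard < Fintype.card V + 1)
    (e : G.edgeSet) : PV e ⟨2 * Fintype.card V, by omega⟩ ∈ S := by
  by_contra htop
  have hcnt := count_empty hS e (2 * Fintype.card V) (by omega) htop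
  have hinj : Function.Injective (fun j : Fin K => (PV e j : GVert G)) := by
    intro a b hab
    simpa using hab
  have himg : (fun j : Fin K => (PV e j : GVert G)) ''
      {j : Fin K | j.val ≤ 2 * Fintype.card V ∧ PV e j ∉ S} ⊆ Sᶜ := by
    rintro x ⟨j, ⟨-, hj⟩, rfl⟩
    exact hj
  have := Set.ncard_le_ncard himg (Set.toFinite _)
  rw [Set.ncard_image_of_injective _ hinj] at this
  have h2 : 2 * Fintype.card V / 2 = Fintype.card V := by omega
  omega

lemma path_filled (hS : Stalled (GG G) S) (hsmall : Sᶜ.ncard < Fintype.card V + 1)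
    (hN : 1 ≤ Fintype.card V) (e : G.edgeSet) (i : Fin K) : PV e i ∈ S := by
  have htopS := top_filled hS hsmall e
  by_contra hi
  by_cases h1 : 1 ≤ i.val
  · exact reach_top hS (2 * Fintype.card V) e i h1 (Nat.sub_le _ _) hi htopS
  · -- i = 0
    have hi0 : i = ⟨0, by omega⟩ := by ext; show i.val = 0; omega
    rw [hi0] at hi
    by_cases h1S : PV e ⟨1, by omega⟩ ∈ S
    · by_cases h2S : PV e ⟨2, by omega⟩ ∈ S
      · -- e^1 forces e^0
        apply hS (PV e ⟨0, by omega⟩)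
        refine ⟨hi, PV e ⟨1, by omega⟩, h1S, (GG G).adj_symm (adj_PP (by simp)), ?_⟩
        intro w hw hwS
        rcases adj_P_cases hw with ⟨v, -, h0', -⟩ | ⟨j, rfl, hj | hj⟩ | ⟨-, h0'⟩
        · exact absurd h0' (by simp)
        · have hj' : 1 + 1 = j.val := hj
          have : j = (⟨2, by omega⟩ : Fin K) := by ext; simp; omega
          rw [this] at hwS; exact absurd h2S hwS
        · have hj' : j.val + 1 = 1 := hj
          have : j = (⟨0, by omega⟩ : Fin K) := by ext; show j.val = 0; omega
          rw [this]
        · exact absurd h0' (by simp)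
      · exact reach_top hS (2 * Fintype.card V) e ⟨2, by omega⟩ (by simp)
          (Nat.sub_le _ _) h2S htopS
    · exact reach_top hS (2 * Fintype.card V) e ⟨1, by omega⟩ (by simp)
        (Nat.sub_le _ _) h1S htopS

end Aux4
section Aux5
variable {V : Type*} [Fintype V] {G : SimpleGraph V}
local notation "K" => 2 * Fintype.card V + 1
variable {S : Set (GVert G)}

/-- if `ε` is filled, all path vertices are filled, and an endpoint of an edge is
empty, then the other endpoint is empty. -/
lemma adj_empty (hS : Stalled (GG G) S) (hsmall : Sᶜ.ncard < Fintype.card V + 1)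
    (hN : 1 ≤ Fintype.card V) (hε : epsV G ∈ S) {a b : V} (hab : G.Adj a b)
    (ha : Sum.inl a ∉ S) : Sum.inl b ∉ S := by
  intro hbS
  set e : G.edgeSet := ⟨s(a, b), hab⟩ with he
  apply hS (Sum.inl a)
  refine ⟨ha, PV e ⟨0, by omega⟩, path_filled hS hsmall hN e _,
    (GG G).adj_symm (adj_v0 ?_ rfl), ?_⟩
  · simp [he]
  intro w hw hwS
  rcases adj_P_cases hw with ⟨v, rfl, -, hv⟩ | ⟨j, rfl, -⟩ | ⟨rfl, -⟩
  · rw [he] at hv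
    simp only [Sym2.mem_iff] at hv
    rcases hv with rfl | rfl
    · rfl
    · exact absurd hbS hwS
  · exact absurd (path_filled hS hsmall hN e j) hwS
  · exact absurd hε hwS

lemma walk_empty (hS : Stalled (GG G) S) (hsmall : Sᶜ.ncard < Fintype.card V + 1)
    (hN : 1 ≤ Fintype.card V) (hε : epsV G ∈ S) {a b : V} (w : G.Walk a b) :
    Sum.inl a ∉ S → Sum.inl b ∉ S := by
  induction w with
  | nil => exact id
  | cons h p ih => exact fun ha => ih (adj_empty hS hsmall hN hε h ha)

end Aux5
section Aux6
variable {V : Type*} [Fintype V] {G : SimpleGraph V}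

lemma gvert_card :
    Nat.card (GVert G) = Fintype.card V + G.edgeSet.ncard * (2 * Fintype.card V + 1) + 1 := by
  simp [Nat.card_sum, Nat.card_prod, Nat.card_eq_fintype_card, Fintype.card_fin,
    Nat.card_coe_set_eq, add_assoc]

lemma range_inl_ncard : (Set.range (Sum.inl : V → GVert G)).ncard = Fintype.card V := by
  rw [← Nat.card_coe_set_eq, Nat.card_range_of_injective Sum.inl_injective,
    Nat.card_eq_fintype_card]
end Aux6
/-- for connected `G`, a proper stalled subset of `𝒢` of cardinality at
least `(2n+1)·|E| + 2` does not contain `ε`. -/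
theorem stalled_large_not_mem_eps {V : Type*} [Fintype V] (G : SimpleGraph V)
    (hG : G.Connected) (S : Set (GVert G)) (hS : Stalled (GG G) S)
    (hproper : S ≠ Set.univ)
    (hcard : (2 * Fintype.card V + 1) * G.edgeSet.ncard + 2 ≤ S.ncard) :
    (Sum.inr (Sum.inr ()) : GVert G) ∉ S := by
  intro hε
  have hε' : epsV G ∈ S := hε
  have hN : 1 ≤ Fintype.card V := Fintype.card_pos_iff.mpr hG.nonempty
  have htot := Set.ncard_add_ncard_compl S
  rw [gvert_card] at htot
  rw [mul_comm] at hcard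
  have hsmall : Sᶜ.ncard < Fintype.card V := by
    generalize hT : G.edgeSet.ncard * (2 * Fintype.card V + 1) = T at htot hcard
    omega
  have hsmall' : Sᶜ.ncard < Fintype.card V + 1 := by omega
  -- some vertex is empty, and it must be a vertex of `G`
  obtain ⟨x, hx⟩ := Set.ne_univ_iff_exists_notMem S |>.mp hproper
  obtain ⟨v, hv⟩ : ∃ v : V, Sum.inl v ∉ S := by
    rcases x with v | ⟨e, i⟩ | u
    · exact ⟨v, hx⟩
    · exact absurd (path_filled hS hsmall' hN e i) hx
    · exact absurd hε' hx
  -- hence every vertex of `G` is empty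
  have hall : ∀ w : V, Sum.inl w ∉ S := fun w =>
    (hG.preconnected v w).elim fun p => walk_empty hS hsmall' hN hε' p hv
  have hsub : Set.range (Sum.inl : V → GVert G) ⊆ Sᶜ := by
    rintro _ ⟨w, rfl⟩
    exact hall w
  have := Set.ncard_le_ncard hsub (Set.toFinite _)
  rw [range_inl_ncard] at this
  omega
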